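/- Let G be a countable discrete group acting continuously on a compact metric space (X,d), let {F_n} be a sequence of finite subsets of G with |F_n| → ∞, let K ⊆ X be non-empty and compact, and let μ be a Borel probability measure on X with μ(K) = 1. Then h^B_top(K,{F_n}) ≥ h̲_μ^{loc}({F_n}). -/

import Mathlib

open Filter Set MeasureTheory Topology ENNReal Pointwise

variable {G X : Type*}

section Defs

variable [Group G] [MetricSpace X] [MulAction G X]

/-- The Bowen ball `B_F(x,ε) = {y : d(gx,gy) < ε for all g ∈ F}`. -/
def bowenBall (F : Finset G) (x : X) (ε : ℝ) : Set X :=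
  {y : X | ∀ g ∈ F, dist (g • x) (g • y) < ε}

/-- A Følner sequence: `|F_n ∆ gF_n|/|F_n| → 0` for every `g ∈ G`. -/
def IsFolnerSeq (F : ℕ → Finset G) : Prop :=
  ∀ g : G, Tendsto
    (fun n => ((symmDiff (F n : Set G) ((g * ·) '' (F n : Set G))).ncard : ℝ) / (F n).card)
    atTop (𝓝 0)

/-- A tempered sequence: `|⋃_{k<n} F_k⁻¹ F_n| ≤ C |F_n|` for all `n`. -/
def IsTemperedSeq (F : ℕ → Finset G) : Prop :=
  ∃ C : ℝ, 0 < C ∧ ∀ n : ℕ,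
    ((⋃ k ∈ Finset.range n, ((F k : Set G)⁻¹ * (F n : Set G))).ncard : ℝ) ≤ C * (F n).card

/-- The growth condition `lim_n |F_n| / log n = ∞`. -/
def GrowthCond (F : ℕ → Finset G) : Prop :=
  Tendsto (fun n : ℕ => ((F n).card : ℝ) / Real.log n) atTop atTop

/-- `M(Z,N,ε,s,{F_n})`: infimum of `∑ exp(-s |F_{n_i}|)` over countable families of Bowen
balls `B_{F_{n_i}}(x_i,ε)`, `n_i ≥ N`, covering `Z`. -/
noncomputable def ballM (F : ℕ → Finset G) (Z : Set X) (N : ℕ) (ε s : ℝ) : ℝ≥0∞ :=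
  ⨅ (I : Set (X × ℕ)) (_ : I.Countable) (_ : ∀ p ∈ I, N ≤ p.2)
    (_ : Z ⊆ ⋃ p ∈ I, bowenBall (F p.2) p.1 ε),
    ∑' p : I, ENNReal.ofReal (Real.exp (-s * ((F (p : X × ℕ).2).card : ℝ)))

/-- `M(Z,ε,s,{F_n}) = lim_{N→∞} M(Z,N,ε,s,{F_n})` (the quantity is nondecreasing in `N`). -/
noncomputable def ballMN (F : ℕ → Finset G) (Z : Set X) (ε s : ℝ) : ℝ≥0∞ :=
  ⨆ N : ℕ, ballM F Z N ε s

/-- `M(Z,s,{F_n}) = lim_{ε→0} M(Z,ε,s,{F_n})` (the quantity is nondecreasing as `ε` decreases). -/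
noncomputable def ballMtot (F : ℕ → Finset G) (Z : Set X) (s : ℝ) : ℝ≥0∞ :=
  ⨆ (ε : ℝ) (_ : 0 < ε), ballMN F Z ε s

/-- The Bowen topological entropy of `Z` along `{F_n}`: the critical value of `s` at which
`M(Z,s,{F_n})` jumps from `+∞` to `0`, i.e. `inf {s : M(Z,s,{F_n}) = 0}`. -/
noncomputable def bowenEnt (F : ℕ → Finset G) (Z : Set X) : ℝ≥0∞ :=
  ⨅ (s : ℝ) (_ : ballMtot F Z s = 0), ENNReal.ofReal s

/-- The weighted quantity `W(f,N,ε,s,{F_n})`. -/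
noncomputable def wtW (F : ℕ → Finset G) (f : X → ℝ≥0∞) (N : ℕ) (ε s : ℝ) : ℝ≥0∞ :=
  ⨅ (I : Set (X × ℕ)) (c : X × ℕ → ℝ≥0∞) (_ : I.Countable)
    (_ : ∀ p ∈ I, N ≤ p.2 ∧ 0 < c p ∧ c p < ⊤)
    (_ : ∀ x : X, f x ≤ ∑' p : I, c (p : X × ℕ) *
        (bowenBall (F (p : X × ℕ).2) (p : X × ℕ).1 ε).indicator (fun _ => (1 : ℝ≥0∞)) x),
    ∑' p : I, c (p : X × ℕ) * ENNReal.ofReal (Real.exp (-s * ((F (p : X × ℕ).2).card : ℝ)))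

/-- `W(Z,N,ε,s,{F_n}) = W(χ_Z,N,ε,s,{F_n})`. -/
noncomputable def wtWset (F : ℕ → Finset G) (Z : Set X) (N : ℕ) (ε s : ℝ) : ℝ≥0∞ :=
  wtW F (Z.indicator fun _ => (1 : ℝ≥0∞)) N ε s

/-- `W(Z,ε,s,{F_n}) = lim_{N→∞} W(Z,N,ε,s,{F_n})`. -/
noncomputable def wtWN (F : ℕ → Finset G) (Z : Set X) (ε s : ℝ) : ℝ≥0∞ :=
  ⨆ N : ℕ, wtWset F Z N ε s

/-- `W(Z,s,{F_n}) = lim_{ε→0} W(Z,ε,s,{F_n})`. -/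
noncomputable def wtWtot (F : ℕ → Finset G) (Z : Set X) (s : ℝ) : ℝ≥0∞ :=
  ⨆ (ε : ℝ) (_ : 0 < ε), wtWN F Z ε s

/-- The weighted Bowen topological entropy of `Z` along `{F_n}`. -/
noncomputable def wtBowenEnt (F : ℕ → Finset G) (Z : Set X) : ℝ≥0∞ :=
  ⨅ (s : ℝ) (_ : wtWtot F Z s = 0), ENNReal.ofReal s

/-- A finite open cover of `X`. -/
def IsFinOpenCover (𝒰 : Finset (Set X)) : Prop :=
  (∀ U ∈ 𝒰, IsOpen U) ∧ ⋃₀ (𝒰 : Set (Set X)) = Set.univ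

/-- `N(⋁_{g∈F} g⁻¹𝒰)`: the minimal cardinality of a subcover of the refined cover, whose members
are the sets `X(𝐔) = ⋂_{g∈F} g⁻¹ U_g` with `U_g ∈ 𝒰`. -/
noncomputable def coverNum (𝒰 : Finset (Set X)) (F : Finset G) : ℕ :=
  sInf {k : ℕ | ∃ Λ : Finset (G → Set X), Λ.card = k ∧
    (∀ u ∈ Λ, ∀ g ∈ F, u g ∈ 𝒰) ∧
    (⋃ u ∈ Λ, ⋂ g ∈ F, (fun y => g • y) ⁻¹' u g) = Set.univ}

/-- `h_top(G,𝒰) = lim_n (1/|F_n|) log N(⋁_{g∈F_n} g⁻¹𝒰)` (the limit exists by Ornstein–Weiss,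
hence equals the `limsup`). -/
noncomputable def coverTopEnt (F : ℕ → Finset G) (𝒰 : Finset (Set X)) : ℝ :=
  limsup (fun n => Real.log (coverNum 𝒰 (F n)) / (F n).card) atTop

/-- The topological entropy `h_top(X,G)`, the supremum over finite open covers. -/
noncomputable def topEnt (X : Type*) [MetricSpace X] [MulAction G X] (F : ℕ → Finset G) : ℝ≥0∞ :=
  ⨆ (𝒰 : Finset (Set X)) (_ : IsFinOpenCover 𝒰), ENNReal.ofReal (coverTopEnt F 𝒰)

/-- `M(Z,𝒰,N,s,{F_n})`: infimum of `∑_{𝐔∈Λ} exp(-s m(𝐔))` over collections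
`Λ ⊆ ⋃_{j≥N} 𝒲_{F_j}(𝒰)` covering `Z`; an element `𝐔 ∈ 𝒲_{F_j}(𝒰)` is encoded as a pair
`(j, u)` with `u g ∈ 𝒰` for `g ∈ F_j` (and `u g = ∅` elsewhere), `X(𝐔) = ⋂_{g∈F_j} g⁻¹ (u g)`
and `m(𝐔) = |F_j|`. -/
noncomputable def covM (F : ℕ → Finset G) (𝒰 : Finset (Set X)) (Z : Set X) (N : ℕ) (s : ℝ) :
    ℝ≥0∞ :=
  ⨅ (Λ : Set (ℕ × (G → Set X)))
    (_ : ∀ p ∈ Λ, N ≤ p.1 ∧ (∀ g ∈ F p.1, p.2 g ∈ 𝒰) ∧ (∀ g ∉ F p.1, p.2 g = ∅))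
    (_ : Z ⊆ ⋃ p ∈ Λ, ⋂ g ∈ F p.1, (fun y => g • y) ⁻¹' p.2 g),
    ∑' p : Λ, ENNReal.ofReal (Real.exp (-s * ((F (p : ℕ × (G → Set X)).1).card : ℝ)))

/-- `M(Z,𝒰,s,{F_n}) = lim_{N→∞} M(Z,𝒰,N,s,{F_n})`. -/
noncomputable def covMtot (F : ℕ → Finset G) (𝒰 : Finset (Set X)) (Z : Set X) (s : ℝ) : ℝ≥0∞ :=
  ⨆ N : ℕ, covM F 𝒰 Z N s

/-- The cover-based Bowen topological entropy `h^B_top(𝒰,Z,{F_n}) = inf {s : M(Z,𝒰,s,{F_n}) = 0}`. -/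
noncomputable def covBowenEnt (F : ℕ → Finset G) (𝒰 : Finset (Set X)) (Z : Set X) : ℝ≥0∞ :=
  ⨅ (s : ℝ) (_ : covMtot F 𝒰 Z s = 0), ENNReal.ofReal s

/-- `diam(𝒰) = max {diam U : U ∈ 𝒰}`. -/
noncomputable def coverDiam (𝒰 : Finset (Set X)) : ℝ≥0∞ :=
  ⨆ U ∈ 𝒰, EMetric.diam U

end Defs

section MeasureDefs

variable [Group G] [MetricSpace X] [MulAction G X] [MeasurableSpace X]

/-- The quantity `-(1/m) log μ(B)`, with value `+∞` when `μ B = 0`. -/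
noncomputable def locTerm (μ : Measure X) (B : Set X) (m : ℕ) : ℝ≥0∞ :=
  if μ B = 0 then ⊤ else ENNReal.ofReal (-(Real.log ((μ B).toReal)) / (m : ℝ))

/-- The lower local entropy `h̲_μ^{loc}(x,ε,{F_n}) = liminf_n -(1/|F_n|) log μ(B_{F_n}(x,ε))`. -/
noncomputable def lowLoc (μ : Measure X) (F : ℕ → Finset G) (x : X) (ε : ℝ) : ℝ≥0∞ :=
  liminf (fun n => locTerm μ (bowenBall (F n) x ε) (F n).card) atTop

/-- The upper local entropy `limsup_n -(1/|F_n|) log μ(B_{F_n}(x,ε))`. -/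
noncomputable def upLoc (μ : Measure X) (F : ℕ → Finset G) (x : X) (ε : ℝ) : ℝ≥0∞ :=
  limsup (fun n => locTerm μ (bowenBall (F n) x ε) (F n).card) atTop

/-- `h̲_μ^{loc}(x,{F_n}) = lim_{ε→0} h̲_μ^{loc}(x,ε,{F_n})` (a monotone limit, i.e. the
supremum over `ε > 0`). -/
noncomputable def lowLocPt (μ : Measure X) (F : ℕ → Finset G) (x : X) : ℝ≥0∞ :=
  ⨆ (ε : ℝ) (_ : 0 < ε), lowLoc μ F x ε

/-- `h̲_μ^{loc}({F_n}) = ∫_X h̲_μ^{loc}(x,{F_n}) dμ(x)`. -/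
noncomputable def lowLocEnt (μ : Measure X) (F : ℕ → Finset G) : ℝ≥0∞ :=
  ∫⁻ x, lowLocPt μ F x ∂μ

/-- A finite measurable partition of `X`, presented as `P : Fin k → Set X`. -/
def IsMeasPartition {k : ℕ} (P : Fin k → Set X) : Prop :=
  (∀ i, MeasurableSet (P i)) ∧ Pairwise (Function.onFun Disjoint P) ∧ (⋃ i, P i) = Set.univ

/-- The static entropy `H_μ(𝒫_F)` of the join `𝒫_F = ⋁_{g∈F} g⁻¹𝒫`; its atoms are the
nonempty sets `⋂_{g∈F} g⁻¹ P(u g)` (distinct choices `u` yield disjoint atoms, and empty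
atoms contribute `0`). -/
noncomputable def partH (μ : Measure X) {k : ℕ} (P : Fin k → Set X) (F : Finset G) : ℝ :=
  letI := Classical.decEq G
  ∑ u : (↥F → Fin k),
    Real.negMulLog ((μ (⋂ g : ↥F, (fun y => (g : G) • y) ⁻¹' P (u g))).toReal)

/-- `h_μ(G,𝒫) = liminf_n (1/|F_n|) H_μ(𝒫_{F_n})`. -/
noncomputable def partEnt (μ : Measure X) (F : ℕ → Finset G) {k : ℕ} (P : Fin k → Set X) : ℝ :=
  liminf (fun n => partH μ P (F n) / (F n).card) atTop

/-- The measure-theoretic entropy `h_μ(X,G) = sup_𝒫 h_μ(G,𝒫)` (it is independent of the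
Følner sequence used to compute it). -/
noncomputable def measEnt (μ : Measure X) (F : ℕ → Finset G) : ℝ≥0∞ :=
  ⨆ (k : ℕ) (P : Fin k → Set X) (_ : IsMeasPartition P), ENNReal.ofReal (partEnt μ F P)

/-- Ergodicity of the `G`-action w.r.t. `μ`. -/
def IsErgodicGAction (G : Type*) [Group G] [MulAction G X] (μ : Measure X) : Prop :=
  ∀ A : Set X, MeasurableSet A → (∀ g : G, (g • ·) ⁻¹' A = A) → μ A = 0 ∨ μ A = 1

end MeasureDefs

section Aux

variable [Group G] [MetricSpace X] [MulAction G X] [MeasurableSpace X]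

lemma locTerm_key (μ : Measure X) (B : Set X) (hfin : μ B ≠ ⊤) {m : ℕ} {t : ℝ}
    (h : ENNReal.ofReal t < locTerm μ B m) :
    μ B ≤ ENNReal.ofReal (Real.exp (-t * m)) := by
  by_cases h0 : μ B = 0
  · simp [h0]
  rw [locTerm, if_neg h0] at h
  set r := (μ B).toReal with hr
  have hrpos : 0 < r := ENNReal.toReal_pos h0 hfin
  have hq : 0 < -Real.log r / m :=
    ENNReal.ofReal_pos.mp (lt_of_le_of_lt (zero_le) h)
  have ht : t < -Real.log r / m := (ENNReal.ofReal_lt_ofReal_iff hq).mp h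
  have hm : 0 < (m : ℝ) := by
    cases m with
    | zero => simp at hq
    | succ n => exact_mod_cast n.succ_pos
  have h2 : t * m < -Real.log r := (lt_div_iff₀ hm).mp ht
  have h3 : r < Real.exp (-t * m) := by
    have := Real.exp_lt_exp.mpr (show Real.log r < -(t * m) by linarith)
    rwa [Real.exp_log hrpos, neg_mul] at *
  calc μ B = ENNReal.ofReal r := (ENNReal.ofReal_toReal hfin).symm
    _ ≤ ENNReal.ofReal (Real.exp (-t * m)) := ENNReal.ofReal_le_ofReal h3.le

lemma locTerm_anti (μ : Measure X) {B B' : Set X} (hle : μ B' ≤ μ B) (hfin : μ B ≠ ⊤)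
    (m : ℕ) : locTerm μ B m ≤ locTerm μ B' m := by
  by_cases h0' : μ B' = 0
  · simp [locTerm, h0']
  have h0 : μ B ≠ 0 := fun h => h0' (le_antisymm (h ▸ hle) (zero_le))
  rw [locTerm, locTerm, if_neg h0, if_neg h0']
  apply ENNReal.ofReal_le_ofReal
  have hfin' : μ B' ≠ ⊤ := (lt_of_le_of_lt hle hfin.lt_top).ne
  have hlog : Real.log ((μ B').toReal) ≤ Real.log ((μ B).toReal) :=
    Real.log_le_log (ENNReal.toReal_pos h0' hfin') (ENNReal.toReal_mono hfin hle)
  rcases Nat.eq_zero_or_pos m with hm | hm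
  · simp [hm]
  · have hm' : (0 : ℝ) < m := by exact_mod_cast hm
    gcongr

lemma bowenBall_mono (Fn : Finset G) (x : X) {ε' ε : ℝ} (h : ε' ≤ ε) :
    bowenBall Fn x ε' ⊆ bowenBall Fn x ε :=
  fun y hy g hg => (hy g hg).trans_le h

lemma lowLoc_anti (μ : Measure X) [IsProbabilityMeasure μ] (F : ℕ → Finset G) (x : X)
    {ε' ε : ℝ} (h : ε' ≤ ε) : lowLoc μ F x ε ≤ lowLoc μ F x ε' := by
  refine Filter.liminf_le_liminf (Filter.Eventually.of_forall fun n => ?_)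
  exact locTerm_anti μ (measure_mono (bowenBall_mono (F n) x h))
    (by simp [measure_ne_top]) _

end Aux
/-- If `|F_n| → ∞`, `K ⊆ X` is non-empty compact and `μ` is a Borel
probability measure with `μ(K) = 1`, then `h^B_top(K,{F_n}) ≥ h̲_μ^{loc}({F_n})`. -/
theorem lowLocEnt_le_bowenEnt
    [Group G] [Countable G] [MetricSpace X] [CompactSpace X]
    [MulAction G X] [ContinuousConstSMul G X] [MeasurableSpace X] [BorelSpace X]
    (F : ℕ → Finset G) (hF : Tendsto (fun n => (F n).card) atTop atTop)
    (K : Set X) (hK : K.Nonempty) (hKc : IsCompact K)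
    (μ : Measure X) [IsProbabilityMeasure μ] (hμK : μ K = 1) :
    lowLocEnt μ F ≤ bowenEnt F K := by
  rw [bowenEnt]
  refine le_iInf₂ fun s hMs => ?_
  -- First, 0 < s.
  have hspos : 0 < s := by
    by_contra hle
    push_neg at hle
    have h1 : ballMN F K 1 s = 0 := by
      have h := le_iSup₂ (f := fun (ε : ℝ) (_ : 0 < ε) => ballMN F K ε s) 1 one_pos
      rw [← ballMtot, hMs] at h
      exact le_antisymm h (zero_le)
    have h2 : ballM F K 0 1 s = 0 := by
      have h := le_iSup (fun N => ballM F K N 1 s) 0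
      rw [← ballMN, h1] at h
      exact le_antisymm h (zero_le)
    have h3 : (1 : ℝ≥0∞) ≤ ballM F K 0 1 s := by
      rw [ballM]
      refine le_iInf₂ fun I hIc => le_iInf₂ fun _ hcov => ?_
      obtain ⟨x, hx⟩ := hK
      obtain ⟨p, hpI, hxp⟩ := by simpa only [Set.mem_iUnion, exists_prop] using hcov hx
      refine le_trans ?_ (ENNReal.le_tsum (⟨p, hpI⟩ : I))
      rw [ENNReal.one_le_ofReal]
      exact Real.one_le_exp (mul_nonneg (neg_nonneg.mpr hle) (Nat.cast_nonneg _))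
    rw [h2] at h3
    exact (not_le.mpr zero_lt_one) h3
  by_contra hcon
  push_neg at hcon
  -- Find t > s with positive measure of high local entropy.
  have hex : ∃ t, s < t ∧ 0 < μ {x | ENNReal.ofReal t < lowLocPt μ F x} := by
    by_contra h
    push_neg at h
    have hnull : ∀ n : ℕ,
        μ {x | ENNReal.ofReal (s + 1 / (n + 1)) < lowLocPt μ F x} = 0 := fun n =>
      le_antisymm (h _ (lt_add_of_pos_right s (by positivity))) (zero_le)
    have hU : μ (⋃ n : ℕ, {x | ENNReal.ofReal (s + 1 / (n + 1)) < lowLocPt μ F x}) = 0 :=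
      measure_iUnion_null hnull
    have hae : ∀ᵐ x ∂μ, lowLocPt μ F x ≤ ENNReal.ofReal s := by
      filter_upwards [measure_eq_zero_iff_ae_notMem.mp hU] with x hx
      simp only [Set.mem_iUnion, Set.mem_setOf_eq, not_exists, not_lt] at hx
      refine ENNReal.le_of_forall_pos_le_add fun δ hδ _ => ?_
      obtain ⟨n, hn⟩ := exists_nat_one_div_lt (show (0 : ℝ) < δ by exact_mod_cast hδ)
      refine (hx n).trans ?_
      refine (ENNReal.ofReal_add_le).trans ?_
      gcongr
      calc ENNReal.ofReal (1 / (n + 1)) ≤ ENNReal.ofReal δ :=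
            ENNReal.ofReal_le_ofReal hn.le
        _ = (δ : ℝ≥0∞) := ENNReal.ofReal_coe_nnreal
    have : lowLocEnt μ F ≤ ENNReal.ofReal s := by
      rw [lowLocEnt]
      calc ∫⁻ x, lowLocPt μ F x ∂μ ≤ ∫⁻ _, ENNReal.ofReal s ∂μ := lintegral_mono_ae hae
        _ = ENNReal.ofReal s := by simp
    exact absurd this (not_le.mpr hcon)
  obtain ⟨t, hst, hA0⟩ := hex
  -- Find ε = 1/(m+1).
  have hsub1 : {x | ENNReal.ofReal t < lowLocPt μ F x} ⊆
      ⋃ m : ℕ, {x | ENNReal.ofReal t < lowLoc μ F x (1 / (m + 1))} := by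
    intro x hx
    rw [Set.mem_setOf_eq, lowLocPt, lt_iSup_iff] at hx
    obtain ⟨ε, hx⟩ := hx
    rw [lt_iSup_iff] at hx
    obtain ⟨hε, hx⟩ := hx
    obtain ⟨m, hm⟩ := exists_nat_one_div_lt hε
    exact Set.mem_iUnion.mpr ⟨m, hx.trans_le (lowLoc_anti μ F x hm.le)⟩
  have hexm : ∃ m : ℕ, 0 < μ {x | ENNReal.ofReal t < lowLoc μ F x (1 / (m + 1))} := by
    by_contra h
    push_neg at h
    have : μ {x | ENNReal.ofReal t < lowLocPt μ F x} = 0 :=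
      le_antisymm ((measure_mono hsub1).trans
        (measure_iUnion_null fun m => le_antisymm (h m) (zero_le)).le) (zero_le)
    exact absurd this hA0.ne'
  obtain ⟨m, hAm⟩ := hexm
  set ε : ℝ := 1 / (m + 1) with hεdef
  have hε : 0 < ε := by positivity
  -- Find N.
  have hsub2 : {x | ENNReal.ofReal t < lowLoc μ F x ε} ⊆
      ⋃ N : ℕ, {x | ∀ n ≥ N,
        ENNReal.ofReal t < locTerm μ (bowenBall (F n) x ε) (F n).card} := by
    intro x hx
    rw [Set.mem_setOf_eq, lowLoc] at hx
    have hev := Filter.eventually_lt_of_lt_liminf hx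
    obtain ⟨N, hN⟩ := Filter.eventually_atTop.mp hev
    exact Set.mem_iUnion.mpr ⟨N, hN⟩
  have hexN : ∃ N : ℕ, 0 < μ {x | ∀ n ≥ N,
      ENNReal.ofReal t < locTerm μ (bowenBall (F n) x ε) (F n).card} := by
    by_contra h
    push_neg at h
    have : μ {x | ENNReal.ofReal t < lowLoc μ F x ε} = 0 :=
      le_antisymm ((measure_mono hsub2).trans
        (measure_iUnion_null fun N => le_antisymm (h N) (zero_le)).le) (zero_le)
    exact absurd this hAm.ne'
  obtain ⟨N, hCN⟩ := hexN
  set C : Set X := {x | ∀ n ≥ N,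
    ENNReal.ofReal t < locTerm μ (bowenBall (F n) x ε) (F n).card} with hCdef
  set E : Set X := C ∩ K with hEdef
  have hKcompl : μ Kᶜ = 0 := by
    rw [measure_compl hKc.isClosed.measurableSet (measure_ne_top μ K), hμK,
      measure_univ, tsub_self]
  have hE : 0 < μ E := by
    by_contra h
    push_neg at h
    have hE0 : μ E = 0 := le_antisymm h (zero_le)
    have : μ C ≤ μ E + μ Kᶜ :=
      (measure_mono (fun x hx => by
        by_cases hxK : x ∈ K
        · exact Set.mem_union_left _ ⟨hx, hxK⟩
        · exact Set.mem_union_right _ hxK)).trans (measure_union_le _ _)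
    rw [hE0, hKcompl, add_zero] at this
    exact absurd (le_antisymm this (zero_le)) hCN.ne'
  -- Extract a cover with small sum.
  have hMN : ballM F K N (ε / 2) s = 0 := by
    have h1 : ballMN F K (ε / 2) s = 0 := by
      have h := le_iSup₂ (f := fun (ε : ℝ) (_ : 0 < ε) => ballMN F K ε s) (ε / 2)
        (half_pos hε)
      rw [← ballMtot, hMs] at h
      exact le_antisymm h (zero_le)
    have h := le_iSup (fun N => ballM F K N (ε / 2) s) N
    rw [← ballMN, h1] at h
    exact le_antisymm h (zero_le)
  have hlt : ballM F K N (ε / 2) s < μ E := by rw [hMN]; exact hE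
  rw [ballM] at hlt
  simp only [iInf_lt_iff] at hlt
  obtain ⟨I, hIc, hmem, hcov, hsum⟩ := hlt
  -- Termwise bound.
  have hterm : ∀ p : I, μ (E ∩ bowenBall (F (p : X × ℕ).2) (p : X × ℕ).1 (ε / 2)) ≤
      ENNReal.ofReal (Real.exp (-s * ((F (p : X × ℕ).2).card : ℝ))) := by
    rintro ⟨p, hpI⟩
    by_cases hne : (E ∩ bowenBall (F p.2) p.1 (ε / 2)).Nonempty
    · obtain ⟨y, hyE, hyB⟩ := hne
      have hsubB : bowenBall (F p.2) p.1 (ε / 2) ⊆ bowenBall (F p.2) y ε := by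
        intro z hz g hg
        calc dist (g • y) (g • z) ≤ dist (g • y) (g • p.1) + dist (g • p.1) (g • z) :=
              dist_triangle _ _ _
          _ < ε / 2 + ε / 2 := by
              refine add_lt_add ?_ (hz g hg)
              rw [dist_comm]; exact hyB g hg
          _ = ε := add_halves ε
      have hloc : ENNReal.ofReal t < locTerm μ (bowenBall (F p.2) y ε) (F p.2).card :=
        hyE.1 p.2 (hmem p hpI)
      calc μ (E ∩ bowenBall (F p.2) p.1 (ε / 2))
          ≤ μ (bowenBall (F p.2) y ε) :=
            measure_mono (Set.inter_subset_right.trans hsubB)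
        _ ≤ ENNReal.ofReal (Real.exp (-t * ((F p.2).card : ℝ))) :=
            locTerm_key μ _ (measure_ne_top μ _) hloc
        _ ≤ ENNReal.ofReal (Real.exp (-s * ((F p.2).card : ℝ))) := by
            apply ENNReal.ofReal_le_ofReal
            apply Real.exp_le_exp.mpr
            apply mul_le_mul_of_nonneg_right _ (Nat.cast_nonneg _)
            linarith
    · rw [Set.not_nonempty_iff_eq_empty.mp hne, measure_empty]
      exact zero_le
  -- Conclude.
  have hEcov : E ⊆ ⋃ p ∈ I, (E ∩ bowenBall (F p.2) p.1 (ε / 2)) := by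
    intro x hx
    obtain ⟨p, hpI, hxp⟩ := by
      simpa only [Set.mem_iUnion, exists_prop] using hcov hx.2
    exact Set.mem_biUnion hpI ⟨hx, hxp⟩
  have hfinal : μ E ≤ ∑' p : I,
      ENNReal.ofReal (Real.exp (-s * ((F (p : X × ℕ).2).card : ℝ))) := by
    haveI := hIc.to_subtype
    calc μ E ≤ μ (⋃ p ∈ I, (E ∩ bowenBall (F p.2) p.1 (ε / 2))) := measure_mono hEcov
      _ = μ (⋃ p : I, (E ∩ bowenBall (F (p : X × ℕ).2) (p : X × ℕ).1 (ε / 2))) := by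
          rw [Set.biUnion_eq_iUnion]
      _ ≤ ∑' p : I, μ (E ∩ bowenBall (F (p : X × ℕ).2) (p : X × ℕ).1 (ε / 2)) :=
          measure_iUnion_le _
      _ ≤ _ := ENNReal.tsum_le_tsum hterm
  exact absurd (hfinal.trans_lt hsum) (lt_irrefl _)
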